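/- Let (Z_i)_{i≥1} be an i.i.d. sequence of integrable real-valued random variables with E[Z_1] > 0 and P(Z_1 ≥ 1) > 0. Then P(Σ_{i=1}^{k} Z_i > 0 for every k ≥ 1) > 0, i.e., with positive probability all partial sums of the sequence are strictly positive. -/

import Mathlib

open MeasureTheory ProbabilityTheory Filter Finset ENNReal

/-- Partial sums over `Fin n` coordinates below `c` equal sums over `range c`. -/
lemma sum_fin_filter_lt {n c : ℕ} (hc : c ≤ n) (f : ℕ → ℝ) :
    ∑ i ∈ Finset.univ.filter (fun i : Fin n => (i : ℕ) < c), f i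
      = ∑ i ∈ Finset.range c, f i := by
  rw [Finset.sum_filter, Fin.sum_univ_eq_sum_range (fun j => if j < c then f j else 0) n,
    ← Finset.sum_filter]
  congr 1
  ext i
  simp only [Finset.mem_filter, Finset.mem_range]
  omega

/-- The law of a finite subfamily of an independent family is the product of the laws. -/
lemma iid_map_tuple {Ω : Type*} [MeasureSpace Ω]
    [IsProbabilityMeasure (ℙ : Measure Ω)] (Z : ℕ → Ω → ℝ)
    (hmeas : ∀ i, Measurable (Z i))
    (hindep : iIndepFun Z ℙ)
    {n : ℕ} (g : Fin n → ℕ) (hg : Function.Injective g) :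
    Measure.map (fun ω (i : Fin n) => Z (g i) ω) ℙ
      = Measure.pi (fun i => Measure.map (Z (g i)) ℙ) := by
  refine (Measure.pi_eq fun s hs => ?_).symm
  have hΦ : Measurable (fun ω (i : Fin n) => Z (g i) ω) :=
    measurable_pi_lambda _ fun i => hmeas _
  rw [Measure.map_apply hΦ (MeasurableSet.univ_pi hs)]
  have hmap : ∀ i : Fin n, (Measure.map (Z (g i)) ℙ) (s i) = ℙ (Z (g i) ⁻¹' s i) :=
    fun i => Measure.map_apply (hmeas _) (hs i)
  simp_rw [hmap]
  set sets' : ℕ → Set ℝ := fun j => ⋂ (i : Fin n) (_ : g i = j), s i with hsets'def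
  have key : ∀ i : Fin n, sets' (g i) = s i := by
    intro i
    apply subset_antisymm
    · intro x hx
      exact Set.mem_iInter₂.mp hx i rfl
    · intro x hx
      refine Set.mem_iInter₂.2 fun i' hi' => ?_
      rw [hg hi']
      exact hx
  have hsets' : ∀ j, MeasurableSet (sets' j) :=
    fun j => MeasurableSet.iInter fun i => MeasurableSet.iInter fun _ => hs i
  have hprod := hindep.measure_inter_preimage_eq_mul (Finset.image g Finset.univ)
    (sets := sets') (fun j _ => hsets' j)
  have hsetEq : (⋂ j ∈ Finset.image g Finset.univ, Z j ⁻¹' sets' j)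
      = (fun ω (i : Fin n) => Z (g i) ω) ⁻¹' Set.pi Set.univ s := by
    ext ω
    simp only [Set.mem_iInter, Finset.mem_image, Finset.mem_univ, true_and,
      Set.mem_preimage, Set.mem_pi, Set.mem_univ, forall_true_left]
    constructor
    · intro h i
      have := h (g i) ⟨i, rfl⟩
      rwa [key i] at this
    · rintro h j ⟨i, rfl⟩
      rw [key i]
      exact h i
  rw [hsetEq] at hprod
  rw [hprod, Finset.prod_image (fun i _ i' _ h => hg h)]
  exact Finset.prod_congr rfl fun i _ => by rw [key i]

/-- Probabilities of events about finitely many partial sums are shift invariant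
for iid sequences. -/
lemma iid_shift_prob_eq {Ω : Type*} [MeasureSpace Ω]
    [IsProbabilityMeasure (ℙ : Measure Ω)] (Z : ℕ → Ω → ℝ)
    (hmeas : ∀ i, Measurable (Z i))
    (hindep : iIndepFun Z ℙ)
    (hident : ∀ i, IdentDistrib (Z i) (Z 0) ℙ ℙ)
    (m : ℕ) (c : ℝ) (n : ℕ) :
    ℙ {ω | ∀ j, 1 ≤ j → j ≤ n → c < ∑ i ∈ Finset.range j, Z (m + i) ω}
      = ℙ {ω | ∀ j, 1 ≤ j → j ≤ n → c < ∑ i ∈ Finset.range j, Z i ω} := by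
  set E : Set (Fin n → ℝ) :=
    {x | ∀ j, 1 ≤ j → j ≤ n →
      c < ∑ i ∈ Finset.univ.filter (fun i : Fin n => (i : ℕ) < j), x i} with hEdef
  have hE : MeasurableSet E := by
    have : E = ⋂ (j : ℕ) (_ : 1 ≤ j) (_ : j ≤ n),
        {x : Fin n → ℝ | c < ∑ i ∈ Finset.univ.filter (fun i : Fin n => (i : ℕ) < j), x i} := by
      ext x; simp [hEdef, Set.mem_iInter]
    rw [this]
    exact MeasurableSet.iInter fun j => MeasurableSet.iInter fun _ =>
      MeasurableSet.iInter fun _ =>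
        measurableSet_lt measurable_const
          (Finset.measurable_sum _ fun i _ => measurable_pi_apply i)
  have hmain : ∀ f : ℕ → ℕ, Function.Injective (fun i : Fin n => f i) →
      ℙ {ω | ∀ j, 1 ≤ j → j ≤ n → c < ∑ i ∈ Finset.range j, Z (f i) ω}
        = Measure.pi (fun _ : Fin n => Measure.map (Z 0) ℙ) E := by
    intro f hf
    have hΦ : Measurable (fun ω (i : Fin n) => Z (f i) ω) :=
      measurable_pi_lambda _ fun i => hmeas _
    have hpre : {ω | ∀ j, 1 ≤ j → j ≤ n → c < ∑ i ∈ Finset.range j, Z (f i) ω}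
        = (fun ω (i : Fin n) => Z (f i) ω) ⁻¹' E := by
      ext ω
      simp only [Set.mem_preimage, hEdef, Set.mem_setOf_eq]
      refine forall_congr' fun j => forall_congr' fun _ => forall_congr' fun h2 => ?_
      rw [sum_fin_filter_lt h2 (fun l => Z (f l) ω)]
    have hconst : (fun i : Fin n => Measure.map (Z (f i)) ℙ)
        = fun _ : Fin n => Measure.map (Z 0) ℙ :=
      funext fun i => (hident (f i)).map_eq
    rw [hpre, ← Measure.map_apply hΦ hE,
      iid_map_tuple Z hmeas hindep (fun i : Fin n => f i) hf, hconst]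
  exact (hmain (fun l => m + l) (fun i i' h => Fin.val_injective (by simpa using h))).trans
    (hmain (fun l => l) (fun i i' h => Fin.val_injective h)).symm

/-- If `(Z i)` is an i.i.d. sequence of integrable real random variables with
`E[Z 0] > 0` and `P(Z 0 ≥ 1) > 0`, then with positive probability all partial sums
`∑_{i<k} Z i` (for `k ≥ 1`) are strictly positive. -/
theorem pos_prob_all_partial_sums_pos {Ω : Type*} [MeasureSpace Ω]
    [IsProbabilityMeasure (ℙ : Measure Ω)] (Z : ℕ → Ω → ℝ)
    (hmeas : ∀ i, Measurable (Z i))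
    (hindep : iIndepFun Z ℙ)
    (hident : ∀ i, IdentDistrib (Z i) (Z 0) ℙ ℙ)
    (hint : Integrable (Z 0) ℙ)
    (hmean : 0 < ∫ ω, Z 0 ω ∂ℙ)
    (hpos : 0 < ℙ {ω | 1 ≤ Z 0 ω}) :
    0 < ℙ {ω | ∀ k : ℕ, 1 ≤ k → 0 < ∑ i ∈ Finset.range k, Z i ω} := by
  classical
  -- Strong law of large numbers
  have hpair : Pairwise (Function.onFun (IndepFun · · ℙ) Z) := fun i j hij => hindep.indepFun hij
  have hslln := strong_law_ae_real Z hint hpair hident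
  -- a.s., the partial sums are bounded below
  set S : ℕ → Ω → ℝ := fun k ω => ∑ i ∈ Finset.range k, Z i ω with hSdef
  set D : ℕ → Set Ω := fun M => {ω | ∀ k, 1 ≤ k → -(M : ℝ) < S k ω} with hDdef
  have hae : ∀ᵐ ω ∂(ℙ : Measure Ω), ∃ M : ℕ, ω ∈ D M := by
    filter_upwards [hslln] with ω hω
    have htop : Tendsto (fun k => S k ω) atTop atTop :=
      Tendsto.num tendsto_natCast_atTop_atTop hmean hω
    obtain ⟨N, hN⟩ := Filter.eventually_atTop.mp (htop.eventually_ge_atTop 0)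
    have hne : ((Finset.range (N + 1)).image fun k => S k ω).Nonempty :=
      Finset.Nonempty.image ⟨0, Finset.mem_range.2 (Nat.succ_pos N)⟩ _
    set r := ((Finset.range (N + 1)).image fun k => S k ω).min' hne with hrdef
    obtain ⟨M, hM⟩ := exists_nat_gt (max 0 (-r))
    refine ⟨M, fun k hk => ?_⟩
    have hM0 : (0 : ℝ) < M := lt_of_le_of_lt (le_max_left _ _) hM
    have hMr : -(M : ℝ) < r := by
      have : -r < (M : ℝ) := lt_of_le_of_lt (le_max_right _ _) hM
      linarith
    rcases le_or_gt k N with hkN | hkN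
    · have hmem : S k ω ∈ (Finset.range (N + 1)).image fun k => S k ω :=
        Finset.mem_image_of_mem _ (Finset.mem_range.2 (Nat.lt_succ_of_le hkN))
      have := Finset.min'_le _ _ hmem
      linarith
    · have := hN k hkN.le
      linarith
  -- pick M with positive probability
  have hDM : ∃ M : ℕ, 0 < ℙ (D M) := by
    by_contra hcon
    push_neg at hcon
    have hz : ∀ M, ℙ (D M) = 0 := fun M => le_antisymm (hcon M) (zero_le (a := ℙ (D M)))
    have hU : ℙ (⋃ M, D M) = 0 := measure_iUnion_null hz
    have hUc : ℙ (⋃ M, D M)ᶜ = 0 := by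
      have : {ω | ¬ ∃ M : ℕ, ω ∈ D M} = (⋃ M, D M)ᶜ := by
        ext ω; simp [Set.mem_iUnion]
      rw [← this]
      exact hae
    have h1 : (1 : ℝ≥0∞) ≤ ℙ (⋃ M, D M) + ℙ (⋃ M, D M)ᶜ := by
      have := measure_union_le (μ := (ℙ : Measure Ω)) (⋃ M, D M) (⋃ M, D M)ᶜ
      rwa [Set.union_compl_self, measure_univ] at this
    rw [hU, hUc] at h1
    simp at h1
  obtain ⟨M₀, hM₀⟩ := hDM
  set m := max M₀ 1 with hmdef
  have hm1 : 1 ≤ m := le_max_right _ _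
  have hDm : 0 < ℙ (D m) := by
    refine lt_of_lt_of_le hM₀ (measure_mono fun ω h k hk => ?_)
    refine lt_of_le_of_lt ?_ (h k hk)
    simp only [neg_le_neg_iff, Nat.cast_le]
    exact le_max_left _ _
  -- events B and C
  set B : Set Ω := ⋂ i ∈ Finset.range m, Z i ⁻¹' Set.Ici (1 : ℝ) with hBdef
  set C : Set Ω := {ω | ∀ j, 1 ≤ j → -(m : ℝ) < ∑ i ∈ Finset.range j, Z (m + i) ω} with hCdef
  -- ℙ C = ℙ (D m) > 0
  have hCpos : 0 < ℙ C := by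
    set Cn : ℕ → Set Ω := fun n =>
      {ω | ∀ j, 1 ≤ j → j ≤ n → -(m : ℝ) < ∑ i ∈ Finset.range j, Z (m + i) ω} with hCn
    set Gn : ℕ → Set Ω := fun n =>
      {ω | ∀ j, 1 ≤ j → j ≤ n → -(m : ℝ) < ∑ i ∈ Finset.range j, Z i ω} with hGn
    have hCeq : C = ⋂ n, Cn n := by
      ext ω
      simp only [hCdef, hCn, Set.mem_iInter, Set.mem_setOf_eq]
      exact ⟨fun h n j h1 _ => h j h1, fun h j h1 => h j j h1 le_rfl⟩
    have hDeq : D m = ⋂ n, Gn n := by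
      ext ω
      simp only [hDdef, hGn, hSdef, Set.mem_iInter, Set.mem_setOf_eq]
      exact ⟨fun h n j h1 _ => h j h1, fun h j h1 => h j j h1 le_rfl⟩
    have hCnMeas : ∀ n, MeasurableSet (Cn n) := by
      intro n
      have : Cn n = ⋂ (j : ℕ) (_ : 1 ≤ j) (_ : j ≤ n),
          {ω | -(m : ℝ) < ∑ i ∈ Finset.range j, Z (m + i) ω} := by
        ext ω; simp [hCn, Set.mem_iInter]
      rw [this]
      exact MeasurableSet.iInter fun j => MeasurableSet.iInter fun _ =>
        MeasurableSet.iInter fun _ =>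
          measurableSet_lt measurable_const (Finset.measurable_sum _ fun i _ => hmeas _)
    have hGnMeas : ∀ n, MeasurableSet (Gn n) := by
      intro n
      have : Gn n = ⋂ (j : ℕ) (_ : 1 ≤ j) (_ : j ≤ n),
          {ω | -(m : ℝ) < ∑ i ∈ Finset.range j, Z i ω} := by
        ext ω; simp [hGn, Set.mem_iInter]
      rw [this]
      exact MeasurableSet.iInter fun j => MeasurableSet.iInter fun _ =>
        MeasurableSet.iInter fun _ =>
          measurableSet_lt measurable_const (Finset.measurable_sum _ fun i _ => hmeas _)
    have hCnAnti : Antitone Cn := by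
      intro a b hab ω h j h1 h2
      exact h j h1 (h2.trans hab)
    have hGnAnti : Antitone Gn := by
      intro a b hab ω h j h1 h2
      exact h j h1 (h2.trans hab)
    have hCmeasure : ℙ C = ⨅ n, ℙ (Cn n) := by
      rw [hCeq]
      exact Directed.measure_iInter (fun n => (hCnMeas n).nullMeasurableSet)
        hCnAnti.directed_ge ⟨0, measure_ne_top _ _⟩
    have hDmeasure : ℙ (D m) = ⨅ n, ℙ (Gn n) := by
      rw [hDeq]
      exact Directed.measure_iInter (fun n => (hGnMeas n).nullMeasurableSet)
        hGnAnti.directed_ge ⟨0, measure_ne_top _ _⟩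
    have heq : ∀ n, ℙ (Cn n) = ℙ (Gn n) :=
      fun n => iid_shift_prob_eq Z hmeas hindep hident m (-(m : ℝ)) n
    rw [hCmeasure]
    simp_rw [heq]
    rw [← hDmeasure]
    exact hDm
  -- ℙ B = p ^ m > 0
  have hBval : ℙ B = (ℙ {ω | 1 ≤ Z 0 ω}) ^ m := by
    have hprod := hindep.measure_inter_preimage_eq_mul (Finset.range m)
      (sets := fun _ => Set.Ici (1 : ℝ)) (fun i _ => measurableSet_Ici)
    rw [hBdef, hprod]
    have : ∀ i ∈ Finset.range m, ℙ (Z i ⁻¹' Set.Ici (1 : ℝ)) = ℙ {ω | 1 ≤ Z 0 ω} := by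
      intro i _
      have := (hident i).measure_mem_eq (s := Set.Ici (1 : ℝ)) measurableSet_Ici
      rw [this]
      rfl
    rw [Finset.prod_congr rfl this, Finset.prod_const, Finset.card_range]
  have hBpos : 0 < ℙ B := by
    rw [hBval]
    exact ENNReal.pow_pos hpos m
  -- independence of B and C
  have hindep' : iIndep (fun i => MeasurableSpace.comap (Z i) inferInstance) ℙ :=
    (iIndepFun_iff_iIndep _ _ _).mp hindep
  set mS := ⨆ i ∈ {i : ℕ | i < m}, MeasurableSpace.comap (Z i) inferInstance with hmS
  set mT := ⨆ i ∈ {i : ℕ | m ≤ i}, MeasurableSpace.comap (Z i) inferInstance with hmT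
  have hST : Indep mS mT ℙ := by
    refine indep_iSup_of_disjoint (fun i => (hmeas i).comap_le) hindep' ?_
    exact Set.disjoint_left.mpr fun i hi hi' => by
      simp only [Set.mem_setOf_eq] at hi hi'; omega
  have hB : MeasurableSet[mS] B := by
    refine MeasurableSet.iInter fun i => MeasurableSet.iInter fun hi => ?_
    have hle : MeasurableSpace.comap (Z i) inferInstance ≤ mS :=
      le_iSup₂ (f := fun i (_ : i ∈ {i : ℕ | i < m}) =>
        MeasurableSpace.comap (Z i) inferInstance) i (Finset.mem_range.mp hi)
    exact hle _ ⟨Set.Ici (1 : ℝ), measurableSet_Ici, rfl⟩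
  have hC : MeasurableSet[mT] C := by
    have hZm : ∀ i : ℕ, m ≤ i → Measurable[mT] (Z i) := by
      intro i hi
      refine measurable_iff_comap_le.mpr ?_
      exact le_iSup₂ (f := fun i (_ : i ∈ {i : ℕ | m ≤ i}) =>
        MeasurableSpace.comap (Z i) inferInstance) i hi
    have hsum : ∀ j : ℕ, Measurable[mT] (fun ω => ∑ i ∈ Finset.range j, Z (m + i) ω) :=
      fun j => Finset.measurable_sum _ fun i _ => hZm (m + i) (Nat.le_add_right m i)
    have : C = ⋂ (j : ℕ) (_ : 1 ≤ j),
        {ω | -(m : ℝ) < ∑ i ∈ Finset.range j, Z (m + i) ω} := by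
      ext ω; simp [hCdef, Set.mem_iInter]
    rw [this]
    exact MeasurableSet.iInter fun j => MeasurableSet.iInter fun _ =>
      measurableSet_lt measurable_const (hsum j)
  have hBC : ℙ (B ∩ C) = ℙ B * ℙ C := (Indep_iff _ _ _).mp hST B C hB hC
  -- inclusion
  have hsub : B ∩ C ⊆ {ω | ∀ k : ℕ, 1 ≤ k → 0 < ∑ i ∈ Finset.range k, Z i ω} := by
    rintro ω ⟨hBω, hCω⟩ k hk
    have hB1 : ∀ i, i < m → 1 ≤ Z i ω := by
      intro i hi
      have := Set.mem_iInter.mp hBω i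
      have := Set.mem_iInter.mp this (Finset.mem_range.mpr hi)
      exact this
    have hCω' : ∀ j, 1 ≤ j → -(m : ℝ) < ∑ i ∈ Finset.range j, Z (m + i) ω := hCω
    rcases le_or_gt k m with hkm | hkm
    · have hsum1 : (k : ℝ) ≤ ∑ i ∈ Finset.range k, Z i ω := by
        calc (k : ℝ) = ∑ _i ∈ Finset.range k, (1 : ℝ) := by simp
        _ ≤ ∑ i ∈ Finset.range k, Z i ω :=
          Finset.sum_le_sum fun i hi =>
            hB1 i (lt_of_lt_of_le (Finset.mem_range.mp hi) hkm)
      have : (1 : ℝ) ≤ (k : ℝ) := by exact_mod_cast hk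
      linarith
    · have hksplit : k = m + (k - m) := by omega
      have hsplit : ∑ i ∈ Finset.range k, Z i ω
          = ∑ i ∈ Finset.range m, Z i ω + ∑ i ∈ Finset.range (k - m), Z (m + i) ω := by
        conv_lhs => rw [hksplit]
        exact Finset.sum_range_add _ m (k - m)
      have hsum1 : (m : ℝ) ≤ ∑ i ∈ Finset.range m, Z i ω := by
        calc (m : ℝ) = ∑ _i ∈ Finset.range m, (1 : ℝ) := by simp
        _ ≤ ∑ i ∈ Finset.range m, Z i ω :=
          Finset.sum_le_sum fun i hi => hB1 i (Finset.mem_range.mp hi)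
      have hsum2 : -(m : ℝ) < ∑ i ∈ Finset.range (k - m), Z (m + i) ω :=
        hCω' (k - m) (by omega)
      rw [hsplit]
      linarith
  calc (0 : ℝ≥0∞) < ℙ B * ℙ C := ENNReal.mul_pos hBpos.ne' hCpos.ne'
  _ = ℙ (B ∩ C) := hBC.symm
  _ ≤ ℙ {ω | ∀ k : ℕ, 1 ≤ k → 0 < ∑ i ∈ Finset.range k, Z i ω} := measure_mono hsub
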